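/- For any CPTP map Φ on N×N density matrices, the largest singular value of its superoperator satisfies σ_1(Φ) ≤ √(N τ_1) ≤ √N, where τ_1 is the largest eigenvalue of the density matrix Φ(𝟙/N). -/

import Mathlib

open Matrix
open scoped BigOperators Kronecker ComplexOrder

noncomputable section

/-- Singular values of a square complex matrix: square roots of eigenvalues of `X * Xᴴ`. -/
def singularValues {n : Type*} [Fintype n] [DecidableEq n] (X : Matrix n n ℂ) : n → ℝ :=
  fun i => Real.sqrt ((Matrix.posSemidef_self_mul_conjTranspose X).1.eigenvalues i)

/-- Shannon entropy of the normalization of a nonnegative vector. -/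
def shannonH {ι : Type*} [Fintype ι] (v : ι → ℝ) : ℝ :=
  -∑ i, (v i / ∑ j, v j) * Real.log (v i / ∑ j, v j)

/-- Rényi entropy of order `q` of the normalization of a nonnegative vector. -/
def renyiH {ι : Type*} [Fintype ι] (q : ℝ) (v : ι → ℝ) : ℝ :=
  (1 / (1 - q)) * Real.log (∑ i, (v i / ∑ j, v j) ^ q)

/-- Unnormalized (von Neumann–type) entropy of the singular value vector. -/
def vnEntropy {n : Type*} [Fintype n] [DecidableEq n] (M : Matrix n n ℂ) : ℝ :=
  -∑ i, singularValues M i * Real.log (singularValues M i)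

/-- A quantum channel: completely positive (Kraus form) and trace preserving. -/
def IsCPTP {N : ℕ} (Φ : Matrix (Fin N) (Fin N) ℂ →ₗ[ℂ] Matrix (Fin N) (Fin N) ℂ) : Prop :=
  ∃ (k : ℕ) (A : Fin k → Matrix (Fin N) (Fin N) ℂ),
    (∀ ρ, Φ ρ = ∑ i, A i * ρ * (A i)ᴴ) ∧ (∑ i, (A i)ᴴ * A i = 1)

/-- Density matrix predicate. -/
def IsDensityMatrix {n : Type*} [Fintype n] [DecidableEq n] (ρ : Matrix n n ℂ) : Prop :=
  ρ.PosSemidef ∧ ρ.trace = 1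

/-- The Choi (dynamical) matrix of a linear map on matrices. -/
def choiMatrix {N : ℕ} (Φ : Matrix (Fin N) (Fin N) ℂ →ₗ[ℂ] Matrix (Fin N) (Fin N) ℂ) :
    Matrix (Fin N × Fin N) (Fin N × Fin N) ℂ :=
  fun p q => Φ (Matrix.single p.2 q.2 1) p.1 q.1

/-- The superoperator matrix of a linear map on matrices. -/
def superMatrix {N : ℕ} (Φ : Matrix (Fin N) (Fin N) ℂ →ₗ[ℂ] Matrix (Fin N) (Fin N) ℂ) :
    Matrix (Fin N × Fin N) (Fin N × Fin N) ℂ :=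
  fun p q => Φ (Matrix.single q.1 q.2 1) p.1 p.2

/-- Hilbert–Schmidt norm of a matrix. -/
def hsNorm {n : Type*} [Fintype n] [DecidableEq n] (M : Matrix n n ℂ) : ℝ :=
  Real.sqrt ((M * Mᴴ).trace.re)

/-- Largest singular value of the superoperator of `Φ`, as the operator norm w.r.t. HS norm. -/
def sigma1 {N : ℕ} (Φ : Matrix (Fin N) (Fin N) ℂ →ₗ[ℂ] Matrix (Fin N) (Fin N) ℂ) : ℝ :=
  sSup {r : ℝ | ∃ M : Matrix (Fin N) (Fin N) ℂ, hsNorm M = 1 ∧ r = hsNorm (Φ M)}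

/-- Sum of the (at most) `m` largest entries of a nonnegative vector. -/
def partialMax {ι : Type*} [Fintype ι] (v : ι → ℝ) (m : ℕ) : ℝ :=
  sSup {t : ℝ | ∃ s : Finset ι, s.card ≤ m ∧ t = ∑ i ∈ s, v i}

/-- `Majorizes w v` means `v ≺ w` (for nonnegative vectors, possibly of different lengths). -/
def Majorizes {ι κ : Type*} [Fintype ι] [Fintype κ] (w : ι → ℝ) (v : κ → ℝ) : Prop :=
  (∑ i, v i = ∑ i, w i) ∧ ∀ m : ℕ, partialMax v m ≤ partialMax w m

/-! ### Auxiliary lemmas -/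

section Aux

set_option linter.unusedSectionVars false

variable {n : Type*} [Fintype n] [DecidableEq n]

private lemma cs_complex {ι : Type*} [Fintype ι] (f g : ι → ℂ) :
    ‖∑ i, f i * (starRingEnd ℂ) (g i)‖ ≤
      Real.sqrt (∑ i, ‖f i‖^2) * Real.sqrt (∑ i, ‖g i‖^2) := by
  calc ‖∑ i, f i * (starRingEnd ℂ) (g i)‖
      ≤ ∑ i, ‖f i * (starRingEnd ℂ) (g i)‖ :=
        norm_sum_le _ _
    _ = ∑ i, ‖f i‖ * ‖g i‖ := by
        refine Finset.sum_congr rfl fun i _ => ?_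
        rw [norm_mul, Complex.norm_conj]
    _ ≤ Real.sqrt (∑ i, ‖f i‖^2) * Real.sqrt (∑ i, ‖g i‖^2) :=
        Real.sum_mul_le_sqrt_mul_sqrt _ _ _

private lemma psd_sum {ι : Type*} (s : Finset ι) (f : ι → Matrix n n ℂ)
    (h : ∀ i ∈ s, (f i).PosSemidef) : (∑ i ∈ s, f i).PosSemidef := by
  classical
  induction s using Finset.induction_on with
  | empty => simpa using Matrix.PosSemidef.zero
  | insert _ _ hx ih =>
      rw [Finset.sum_insert hx]
      exact (h _ (Finset.mem_insert_self _ _)).add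
        (ih fun i hi => h i (Finset.mem_insert_of_mem hi))

private lemma trace_re_nonneg {Q : Matrix n n ℂ} (hQ : Q.PosSemidef) : 0 ≤ (trace Q).re := by
  rw [trace]
  have h : ∀ i, 0 ≤ (Q i i).re := by
    intro i
    have := hQ.dotProduct_mulVec_nonneg (Pi.single i 1)
    rw [Complex.le_def] at this
    simpa [mulVec_single, dotProduct, Pi.single_apply] using this.1
  calc (0:ℝ) ≤ ∑ i, (Q i i).re := Finset.sum_nonneg fun i _ => h i
    _ = (∑ i, Q.diag i).re := by rw [Complex.re_sum]; rfl

private lemma psd_smul_real {P : Matrix n n ℂ} (hP : P.PosSemidef) {r : ℝ} (hr : 0 ≤ r) :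
    ((r:ℂ) • P).PosSemidef := by
  rw [Matrix.posSemidef_iff_dotProduct_mulVec]
  constructor
  · have : ((r:ℂ) • P)ᴴ = (r:ℂ) • Pᴴ := by
      rw [Matrix.conjTranspose_smul]; congr 1; simp [Complex.star_def, Complex.conj_ofReal]
    rw [Matrix.IsHermitian, this, hP.1.eq]
  · intro v
    rw [Matrix.smul_mulVec, dotProduct_smul, smul_eq_mul]
    exact mul_nonneg (Complex.zero_le_real.mpr hr) (hP.dotProduct_mulVec_nonneg v)

private lemma trace_XXH_mul_le {Q : Matrix n n ℂ} {c : ℝ}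
    (h : ((c:ℂ) • (1 : Matrix n n ℂ) - Q).PosSemidef) (X : Matrix n n ℂ) :
    (trace (X * Xᴴ * Q)).re ≤ c * (trace (X * Xᴴ)).re := by
  have h0 : 0 ≤ (trace (Xᴴ * ((c:ℂ) • (1 : Matrix n n ℂ) - Q) * X)).re :=
    trace_re_nonneg (h.conjTranspose_mul_mul_same X)
  have h1 : trace (Xᴴ * ((c:ℂ) • (1 : Matrix n n ℂ) - Q) * X) =
      (c:ℂ) * trace (X * Xᴴ) - trace (X * Xᴴ * Q) := by
    rw [Matrix.trace_mul_cycle]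
    simp only [Matrix.mul_sub, Matrix.mul_smul, Matrix.mul_one, Matrix.trace_sub,
      Matrix.trace_smul, smul_eq_mul, Matrix.mul_assoc]
  rw [h1] at h0
  rw [Complex.sub_re, Complex.re_ofReal_mul] at h0
  linarith

private lemma trace_conj_psd_le {Q : Matrix n n ℂ} {c : ℝ}
    (h : ((c:ℂ) • (1 : Matrix n n ℂ) - Q).PosSemidef) (M : Matrix n n ℂ) :
    (trace (M * Q * Mᴴ)).re ≤ c * (trace (M * Mᴴ)).re := by
  have h0 : 0 ≤ (trace (M * ((c:ℂ) • (1 : Matrix n n ℂ) - Q) * Mᴴ)).re :=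
    trace_re_nonneg (h.mul_mul_conjTranspose_same M)
  have h1 : trace (M * ((c:ℂ) • (1 : Matrix n n ℂ) - Q) * Mᴴ) =
      (c:ℂ) * trace (M * Mᴴ) - trace (M * Q * Mᴴ) := by
    simp only [Matrix.mul_sub, Matrix.sub_mul, Matrix.mul_smul, Matrix.mul_one,
      Matrix.smul_mul, Matrix.trace_sub, Matrix.trace_smul, smul_eq_mul, Matrix.mul_assoc]
  rw [h1] at h0
  rw [Complex.sub_re, Complex.re_ofReal_mul] at h0
  linarith

private lemma trace_mul_conjTranspose_re (X : Matrix n n ℂ) :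
    (trace (X * Xᴴ)).re = ∑ a, ∑ b, ‖X a b‖^2 := by
  rw [trace, Complex.re_sum]
  refine Finset.sum_congr rfl fun a _ => ?_
  rw [diag, mul_apply, Complex.re_sum]
  refine Finset.sum_congr rfl fun b _ => ?_
  rw [conjTranspose_apply, Complex.star_def, Complex.mul_conj]
  simp [Complex.normSq_eq_norm_sq, sq]

private lemma trace_mul_conjTranspose_re_nonneg (X : Matrix n n ℂ) :
    0 ≤ (trace (X * Xᴴ)).re := by
  rw [trace_mul_conjTranspose_re]
  exact Finset.sum_nonneg fun a _ => Finset.sum_nonneg fun b _ => sq_nonneg _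

private lemma trace_mul_conjTranspose_eq (X Y : Matrix n n ℂ) :
    trace (X * Yᴴ) = ∑ p : n × n, X p.1 p.2 * (starRingEnd ℂ) (Y p.1 p.2) := by
  rw [trace, ← Finset.univ_product_univ, Finset.sum_product]
  refine Finset.sum_congr rfl fun a _ => ?_
  rw [diag, mul_apply]
  refine Finset.sum_congr rfl fun b _ => ?_
  rw [conjTranspose_apply, Complex.star_def]

/-- Cauchy–Schwarz for the Frobenius inner product, real-part version. -/
private lemma cs_trace (X Y : Matrix n n ℂ) :
    (trace (X * Yᴴ)).re ≤
      Real.sqrt ((trace (X * Xᴴ)).re) * Real.sqrt ((trace (Y * Yᴴ)).re) := by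
  have h1 : (trace (X * Yᴴ)).re ≤ ‖trace (X * Yᴴ)‖ := Complex.re_le_norm _
  have h2 : ‖trace (X * Yᴴ)‖ ≤
      Real.sqrt (∑ p : n × n, ‖X p.1 p.2‖^2) * Real.sqrt (∑ p : n × n, ‖Y p.1 p.2‖^2) := by
    rw [trace_mul_conjTranspose_eq]
    exact cs_complex _ _
  have hX : (∑ p : n × n, ‖X p.1 p.2‖^2) = (trace (X * Xᴴ)).re := by
    rw [trace_mul_conjTranspose_re, ← Finset.univ_product_univ, Finset.sum_product]
  have hY : (∑ p : n × n, ‖Y p.1 p.2‖^2) = (trace (Y * Yᴴ)).re := by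
    rw [trace_mul_conjTranspose_re, ← Finset.univ_product_univ, Finset.sum_product]
  rw [hX, hY] at h2
  linarith

private lemma dot_star_self_eq (v : n → ℂ) :
    star v ⬝ᵥ v = ((∑ j, ‖v j‖^2 : ℝ) : ℂ) := by
  rw [dotProduct, Complex.ofReal_sum]
  refine Finset.sum_congr rfl fun j _ => ?_
  simp [Complex.star_def, ← Complex.normSq_eq_conj_mul_self, Complex.normSq_eq_norm_sq,
    sq]

private lemma conj_diag_eq' (U : Matrix n n ℂ) (hUU : U * star U = 1) (f : n → ℝ) (c : ℝ) :
    (c:ℂ) • (1 : Matrix n n ℂ) - U * diagonal (fun i => ((f i : ℝ) : ℂ)) * star U =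
      U * diagonal (fun i => ((c - f i : ℝ) : ℂ)) * star U := by
  have hd : diagonal (fun i => ((c - f i : ℝ) : ℂ)) =
      (c:ℂ) • (1 : Matrix n n ℂ) - diagonal (fun i => ((f i : ℝ) : ℂ)) := by
    ext i j
    rcases eq_or_ne i j with rfl | hij
    · simp [Matrix.smul_apply, Complex.ofReal_sub, Matrix.one_apply]
    · simp [hij, Matrix.one_apply, Matrix.smul_apply]
  rw [hd, Matrix.mul_sub, Matrix.sub_mul, Matrix.mul_smul, Matrix.mul_one,
    Matrix.smul_mul, hUU]

private lemma conj_diag_eq {H : Matrix n n ℂ} (hH : H.IsHermitian) (c : ℝ) :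
    (c:ℂ) • (1 : Matrix n n ℂ) - H =
      (hH.eigenvectorUnitary : Matrix n n ℂ) *
        diagonal (fun i => ((c - hH.eigenvalues i : ℝ) : ℂ)) *
        star (hH.eigenvectorUnitary : Matrix n n ℂ) := by
  have hUU : (hH.eigenvectorUnitary : Matrix n n ℂ) *
      star (hH.eigenvectorUnitary : Matrix n n ℂ) = 1 :=
    (Matrix.mem_unitaryGroup_iff).mp hH.eigenvectorUnitary.2
  have hsp : H = (hH.eigenvectorUnitary : Matrix n n ℂ) *
      diagonal (fun i => ((hH.eigenvalues i : ℝ) : ℂ)) *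
      star (hH.eigenvectorUnitary : Matrix n n ℂ) := hH.spectral_theorem
  conv_lhs => rw [hsp]
  exact conj_diag_eq' _ hUU _ c

private lemma loewner_of_eig_le {H : Matrix n n ℂ} (hH : H.IsHermitian) {c : ℝ}
    (h : ∀ i, hH.eigenvalues i ≤ c) : ((c:ℂ) • (1 : Matrix n n ℂ) - H).PosSemidef := by
  rw [conj_diag_eq hH c, Matrix.star_eq_conjTranspose]
  exact Matrix.PosSemidef.mul_mul_conjTranspose_same
    (Matrix.posSemidef_diagonal_iff.mpr fun i => by
      rw [Complex.zero_le_real]; linarith [h i]) _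

private lemma unit_dot {H : Matrix n n ℂ} (hH : H.IsHermitian) (i : n) :
    star (⇑(hH.eigenvectorBasis i)) ⬝ᵥ ⇑(hH.eigenvectorBasis i) = 1 := by
  have h1 : ‖hH.eigenvectorBasis i‖ = 1 := hH.eigenvectorBasis.orthonormal.1 i
  have h2 : ∑ j, ‖(hH.eigenvectorBasis i) j‖^2 = 1 := by
    have := EuclideanSpace.norm_eq (hH.eigenvectorBasis i)
    rw [h1] at this
    have h3 : (0:ℝ) ≤ ∑ j, ‖(hH.eigenvectorBasis i) j‖^2 :=
      Finset.sum_nonneg fun j _ => sq_nonneg _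
    nlinarith [Real.sq_sqrt h3, Real.sqrt_nonneg (∑ j, ‖(hH.eigenvectorBasis i) j‖^2)]
  calc star (⇑(hH.eigenvectorBasis i)) ⬝ᵥ ⇑(hH.eigenvectorBasis i)
      = ((∑ j, ‖(hH.eigenvectorBasis i) j‖^2 : ℝ) : ℂ) := by
        rw [dotProduct, Complex.ofReal_sum]
        refine Finset.sum_congr rfl fun j _ => ?_
        simp [Complex.star_def,
          ← Complex.normSq_eq_conj_mul_self, Complex.normSq_eq_norm_sq,
          sq]
    _ = 1 := by rw [h2]; norm_num

private lemma eig_le_of_loewner {H : Matrix n n ℂ} (hH : H.IsHermitian) {c : ℝ}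
    (h : ((c:ℂ) • (1 : Matrix n n ℂ) - H).PosSemidef) : ∀ i, hH.eigenvalues i ≤ c := by
  intro i
  have hv := h.dotProduct_mulVec_nonneg (⇑(hH.eigenvectorBasis i))
  rw [Complex.le_def] at hv
  have hexp : star (⇑(hH.eigenvectorBasis i)) ⬝ᵥ
      (((c:ℂ) • (1 : Matrix n n ℂ) - H) *ᵥ ⇑(hH.eigenvectorBasis i)) =
      (c:ℂ) - star (⇑(hH.eigenvectorBasis i)) ⬝ᵥ (H *ᵥ ⇑(hH.eigenvectorBasis i)) := by
    rw [Matrix.sub_mulVec, dotProduct_sub, Matrix.smul_mulVec, Matrix.one_mulVec,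
      dotProduct_smul, unit_dot hH i]
    simp
  rw [hexp] at hv
  rw [hH.eigenvalues_eq i]
  have h2 := hv.1
  simpa using h2

private lemma sq_conj_diag_eq {H : Matrix n n ℂ} (hH : H.IsHermitian) :
    H * H = (hH.eigenvectorUnitary : Matrix n n ℂ) *
      diagonal (fun i => ((hH.eigenvalues i ^ 2 : ℝ) : ℂ)) *
      star (hH.eigenvectorUnitary : Matrix n n ℂ) := by
  have hUU : star (hH.eigenvectorUnitary : Matrix n n ℂ) *
      (hH.eigenvectorUnitary : Matrix n n ℂ) = 1 :=
    (Matrix.mem_unitaryGroup_iff').mp hH.eigenvectorUnitary.2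
  conv_lhs => rw [hH.spectral_theorem, Unitary.conjStarAlgAut_apply]
  rw [show ∀ (X D : Matrix n n ℂ) (U : Matrix n n ℂ), (U*D*X)*(U*D*X) = U*D*(X*U)*D*X from
    fun X D U => by noncomm_ring]
  rw [hUU, Matrix.mul_one]
  rw [Matrix.mul_assoc _ _ (diagonal _), diagonal_mul_diagonal]
  congr 1
  · congr 1
    funext i; simp [sq]

private lemma trace_eq_sum_eig {H : Matrix n n ℂ} (hH : H.IsHermitian) :
    trace H = ((∑ i, hH.eigenvalues i : ℝ) : ℂ) := by
  have hUU : star (hH.eigenvectorUnitary : Matrix n n ℂ) *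
      (hH.eigenvectorUnitary : Matrix n n ℂ) = 1 :=
    (Matrix.mem_unitaryGroup_iff').mp hH.eigenvectorUnitary.2
  conv_lhs => rw [hH.spectral_theorem, Unitary.conjStarAlgAut_apply]
  rw [Matrix.trace_mul_comm, ← Matrix.mul_assoc, hUU, Matrix.one_mul,
    Matrix.trace_diagonal]
  simp [Complex.ofReal_sum]

private lemma loewner_sq_of_abs_le {H : Matrix n n ℂ} (hH : H.IsHermitian) {t : ℝ}
    (h : ∀ i, |hH.eigenvalues i| ≤ t) :
    (((t^2 : ℝ) : ℂ) • (1 : Matrix n n ℂ) - H * H).PosSemidef := by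
  have hUU : (hH.eigenvectorUnitary : Matrix n n ℂ) *
      star (hH.eigenvectorUnitary : Matrix n n ℂ) = 1 :=
    (Matrix.mem_unitaryGroup_iff).mp hH.eigenvectorUnitary.2
  rw [sq_conj_diag_eq hH, conj_diag_eq' _ hUU _ _, Matrix.star_eq_conjTranspose]
  refine Matrix.PosSemidef.mul_mul_conjTranspose_same
    (Matrix.posSemidef_diagonal_iff.mpr fun i => ?_) _
  rw [Complex.zero_le_real]
  have := h i
  have h2 : hH.eigenvalues i ^ 2 ≤ t ^ 2 := by
    rw [← sq_abs]
    exact pow_le_pow_left₀ (abs_nonneg _) this 2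
  linarith

private lemma psd_le_of_sq_le {ρ : Matrix n n ℂ} (hρ : ρ.PosSemidef) {t : ℝ} (ht : 0 ≤ t)
    (h : (((t^2 : ℝ) : ℂ) • (1 : Matrix n n ℂ) - ρ * ρ).PosSemidef) :
    ((t : ℂ) • (1 : Matrix n n ℂ) - ρ).PosSemidef := by
  rw [Matrix.posSemidef_iff_dotProduct_mulVec]
  constructor
  · have h1 : ((t:ℂ) • (1 : Matrix n n ℂ)).IsHermitian := by
      simp [Matrix.IsHermitian, Matrix.conjTranspose_smul, Complex.star_def,
        Complex.conj_ofReal]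
    exact h1.sub hρ.1
  intro v
  set w := ρ *ᵥ v with hw
  have hvv : star v ⬝ᵥ v = ((∑ j, ‖v j‖^2 : ℝ) : ℂ) := dot_star_self_eq v
  have hww : star v ⬝ᵥ ((ρ * ρ) *ᵥ v) = ((∑ j, ‖w j‖^2 : ℝ) : ℂ) := by
    rw [← Matrix.mulVec_mulVec, ← hw, Matrix.dotProduct_mulVec]
    have hsw : star v ᵥ* ρ = star w := by rw [hw, Matrix.star_mulVec, hρ.1.eq]
    rw [hsw, dot_star_self_eq w]
  have hsq := h.dotProduct_mulVec_nonneg v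
  rw [Complex.le_def] at hsq
  have hexp : star v ⬝ᵥ ((((t^2 : ℝ) : ℂ) • (1 : Matrix n n ℂ) - ρ * ρ) *ᵥ v) =
      ((t^2 * ∑ j, ‖v j‖^2 - ∑ j, ‖w j‖^2 : ℝ) : ℂ) := by
    rw [Matrix.sub_mulVec, dotProduct_sub, Matrix.smul_mulVec, Matrix.one_mulVec,
      dotProduct_smul, hvv, hww, smul_eq_mul]
    push_cast
    ring
  rw [hexp] at hsq
  have hwb : ∑ j, ‖w j‖^2 ≤ t^2 * ∑ j, ‖v j‖^2 := by
    have := hsq.1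
    simp only [Complex.zero_re, Complex.ofReal_re] at this
    linarith
  have ha := hρ.dotProduct_mulVec_nonneg v
  rw [Complex.le_def] at ha
  have habs : ‖star v ⬝ᵥ w‖ ≤ t * ∑ j, ‖v j‖^2 := by
    have h1 : star v ⬝ᵥ w = ∑ j, w j * (starRingEnd ℂ) (v j) := by
      rw [dotProduct]
      refine Finset.sum_congr rfl fun j _ => ?_
      simp [Complex.star_def, mul_comm]
    rw [h1]
    refine (cs_complex w v).trans ?_
    have h2 : Real.sqrt (∑ j, ‖w j‖^2) ≤ Real.sqrt (t^2 * ∑ j, ‖v j‖^2) :=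
      Real.sqrt_le_sqrt hwb
    have h3 : Real.sqrt (t^2 * ∑ j, ‖v j‖^2) = t * Real.sqrt (∑ j, ‖v j‖^2) := by
      rw [Real.sqrt_mul (sq_nonneg t), Real.sqrt_sq ht]
    have h4 : (0:ℝ) ≤ Real.sqrt (∑ j, ‖v j‖^2) := Real.sqrt_nonneg _
    calc Real.sqrt (∑ j, ‖w j‖^2) * Real.sqrt (∑ j, ‖v j‖^2)
        ≤ (t * Real.sqrt (∑ j, ‖v j‖^2)) * Real.sqrt (∑ j, ‖v j‖^2) := by
          refine mul_le_mul_of_nonneg_right ?_ h4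
          rw [← h3]; exact h2
      _ = t * (Real.sqrt (∑ j, ‖v j‖^2) * Real.sqrt (∑ j, ‖v j‖^2)) := by ring
      _ = t * ∑ j, ‖v j‖^2 := by
          rw [Real.mul_self_sqrt (Finset.sum_nonneg fun j _ => sq_nonneg _)]
  have hgoal : star v ⬝ᵥ (((t : ℂ) • (1 : Matrix n n ℂ) - ρ) *ᵥ v) =
      ((t * ∑ j, ‖v j‖^2 : ℝ) : ℂ) - star v ⬝ᵥ w := by
    rw [Matrix.sub_mulVec, dotProduct_sub, Matrix.smul_mulVec, Matrix.one_mulVec,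
      dotProduct_smul, hvv, smul_eq_mul]
    push_cast
    ring
  rw [hgoal, Complex.le_def]
  constructor
  · simp only [Complex.zero_re, Complex.sub_re, Complex.ofReal_re]
    have : (star v ⬝ᵥ w).re ≤ ‖star v ⬝ᵥ w‖ := Complex.re_le_norm _
    linarith
  · simp only [Complex.zero_im, Complex.sub_im, Complex.ofReal_im]
    rw [← ha.2]
    simp

end Aux

set_option maxHeartbeats 2000000 in
theorem sigma1_le_sqrt_N_tau1 {N : ℕ} (hN : 0 < N)
    (Φ : Matrix (Fin N) (Fin N) ℂ →ₗ[ℂ] Matrix (Fin N) (Fin N) ℂ) (hΦ : IsCPTP Φ) :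
    sigma1 Φ ≤ Real.sqrt (N * ⨆ i, singularValues (Φ ((N : ℂ)⁻¹ • 1)) i) ∧
    Real.sqrt (N * ⨆ i, singularValues (Φ ((N : ℂ)⁻¹ • 1)) i) ≤ Real.sqrt N := by
  classical
  haveI : Nonempty (Fin N) := Fin.pos_iff_nonempty.mp hN
  obtain ⟨k, A, hK, hTP⟩ := hΦ
  set X : Matrix (Fin N) (Fin N) ℂ := Φ ((N : ℂ)⁻¹ • 1) with hXdef
  set τ : ℝ := ⨆ i, singularValues X i with hτdef
  set H : Matrix (Fin N) (Fin N) ℂ := ∑ j, A j * (A j)ᴴ with hHdef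
  have hNne : ((N:ℂ)) ≠ 0 := Nat.cast_ne_zero.mpr hN.ne'
  have hNR : ((N:ℂ))⁻¹ = (((N:ℝ)⁻¹ : ℝ) : ℂ) := by push_cast; ring
  have hX : X = (N:ℂ)⁻¹ • H := by
    rw [hXdef, hK, hHdef, Finset.smul_sum]
    refine Finset.sum_congr rfl fun i _ => ?_
    rw [Matrix.mul_smul, Matrix.mul_one, Matrix.smul_mul]
  have hHpsd : H.PosSemidef :=
    psd_sum _ _ fun j _ => Matrix.posSemidef_self_mul_conjTranspose (A j)
  have hXpsd : X.PosSemidef := by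
    rw [hX, hNR]; exact psd_smul_real hHpsd (by positivity)
  have hherm : X.IsHermitian := hXpsd.1
  have heig_nonneg : ∀ i, 0 ≤ (Matrix.posSemidef_self_mul_conjTranspose X).1.eigenvalues i :=
    fun i => (Matrix.posSemidef_self_mul_conjTranspose X).eigenvalues_nonneg i
  have hbdd : BddAbove (Set.range fun i => singularValues X i) :=
    Set.Finite.bddAbove (Set.finite_range _)
  have hτ0 : 0 ≤ τ := Real.iSup_nonneg fun i => Real.sqrt_nonneg _
  have hτ_ge : ∀ i, singularValues X i ≤ τ := fun i => le_ciSup hbdd i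
  have heig_le : ∀ i, (Matrix.posSemidef_self_mul_conjTranspose X).1.eigenvalues i ≤ τ^2 := by
    intro i
    have h1 := hτ_ge i
    have h2 : singularValues X i =
        Real.sqrt ((Matrix.posSemidef_self_mul_conjTranspose X).1.eigenvalues i) := rfl
    rw [h2] at h1
    nlinarith [Real.sq_sqrt (heig_nonneg i),
      Real.sqrt_nonneg ((Matrix.posSemidef_self_mul_conjTranspose X).1.eigenvalues i)]
  have hsqle : (((τ^2 : ℝ) : ℂ) • (1 : Matrix (Fin N) (Fin N) ℂ) - X * X).PosSemidef := by
    have h1 := loewner_of_eig_le (Matrix.posSemidef_self_mul_conjTranspose X).1 heig_le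
    rwa [hherm.eq] at h1
  have hτle : ((τ : ℂ) • (1 : Matrix (Fin N) (Fin N) ℂ) - X).PosSemidef :=
    psd_le_of_sq_le hXpsd hτ0 hsqle
  have hN0 : (0:ℝ) ≤ (N:ℝ) := Nat.cast_nonneg N
  have hc0 : (0:ℝ) ≤ (N:ℝ) * τ := mul_nonneg hN0 hτ0
  have hc : ((((N:ℝ) * τ : ℝ) : ℂ) • (1 : Matrix (Fin N) (Fin N) ℂ) - H).PosSemidef := by
    have h1 := psd_smul_real hτle hN0
    have h2 : (((N:ℝ) : ℂ)) • ((τ : ℂ) • (1 : Matrix (Fin N) (Fin N) ℂ) - X) =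
        (((N:ℝ) * τ : ℝ) : ℂ) • (1 : Matrix (Fin N) (Fin N) ℂ) - H := by
      rw [smul_sub, smul_smul]
      congr 1
      · congr 1
        push_cast
        ring
      · rw [hX, smul_smul]
        have : (((N:ℝ) : ℂ)) * ((N:ℂ))⁻¹ = 1 := by
          push_cast
          field_simp
        rw [this, one_smul]
    rwa [h2] at h1
  -- trace facts
  have htrH : trace H = (N:ℂ) := by
    rw [hHdef, Matrix.trace_sum]
    have e : ∀ j ∈ Finset.univ, trace (A j * (A j)ᴴ) = trace ((A j)ᴴ * A j) :=
      fun j _ => Matrix.trace_mul_comm _ _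
    rw [Finset.sum_congr rfl e, ← Matrix.trace_sum, hTP]
    simp
  have htrX : trace X = 1 := by
    rw [hX, Matrix.trace_smul, htrH, smul_eq_mul, inv_mul_cancel₀ hNne]
  -- τ ≤ 1
  have heigX_nonneg : ∀ i, 0 ≤ hherm.eigenvalues i := fun i => hXpsd.eigenvalues_nonneg i
  have hsum1 : ∑ i, hherm.eigenvalues i = 1 := by
    have h1 := trace_eq_sum_eig hherm
    rw [htrX] at h1
    exact_mod_cast h1.symm
  have heigX_le1 : ∀ i, hherm.eigenvalues i ≤ 1 := by
    intro i
    calc hherm.eigenvalues i ≤ ∑ j, hherm.eigenvalues j :=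
          Finset.single_le_sum (fun j _ => heigX_nonneg j) (Finset.mem_univ i)
      _ = 1 := hsum1
  have habs1 : ∀ i, |hherm.eigenvalues i| ≤ 1 := fun i =>
    abs_le.mpr ⟨by linarith [heigX_nonneg i], heigX_le1 i⟩
  have hsq1 : (((1:ℝ) : ℂ) • (1 : Matrix (Fin N) (Fin N) ℂ) - X * Xᴴ).PosSemidef := by
    have h1 := loewner_sq_of_abs_le hherm habs1
    rw [hherm.eq]
    convert h1 using 3
    norm_num
  have hτ1 : τ ≤ 1 := by
    refine ciSup_le fun i => ?_
    have h1 := eig_le_of_loewner (Matrix.posSemidef_self_mul_conjTranspose X).1 hsq1 i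
    have h2 : singularValues X i =
        Real.sqrt ((Matrix.posSemidef_self_mul_conjTranspose X).1.eigenvalues i) := rfl
    rw [h2]
    calc Real.sqrt ((Matrix.posSemidef_self_mul_conjTranspose X).1.eigenvalues i)
        ≤ Real.sqrt 1 := Real.sqrt_le_sqrt h1
      _ = 1 := Real.sqrt_one
  constructor
  · -- main bound
    refine Real.sSup_le ?_ (Real.sqrt_nonneg _)
    rintro r ⟨M, hM1, rfl⟩
    have hMnorm : (trace (M * Mᴴ)).re = 1 := by
      have h0 := trace_mul_conjTranspose_re_nonneg M
      have h1 : Real.sqrt ((M * Mᴴ).trace.re) = 1 := hM1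
      nlinarith [Real.sq_sqrt h0]
    have key : (trace (Φ M * (Φ M)ᴴ)).re ≤ (N:ℝ) * τ := by
      set B : Fin k × Fin k → Matrix (Fin N) (Fin N) ℂ :=
        fun p => (A p.1)ᴴ * A p.2 * M with hBdef
      set C : Fin k × Fin k → Matrix (Fin N) (Fin N) ℂ :=
        fun p => M * (A p.1)ᴴ * A p.2 with hCdef
      have hCH : ∀ p : Fin k × Fin k, (C p)ᴴ = (A p.2)ᴴ * A p.1 * Mᴴ := by
        intro p
        simp [hCdef, Matrix.conjTranspose_mul, Matrix.mul_assoc]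
      have hΦM : Φ M = ∑ i, A i * M * (A i)ᴴ := hK M
      have hΦMH : (Φ M)ᴴ = ∑ j, A j * Mᴴ * (A j)ᴴ := by
        rw [hΦM, Matrix.conjTranspose_sum]
        refine Finset.sum_congr rfl fun j _ => ?_
        simp [Matrix.conjTranspose_mul, Matrix.mul_assoc]
      have hterm : ∀ i j : Fin k, trace ((A i * M * (A i)ᴴ) * (A j * Mᴴ * (A j)ᴴ)) =
          trace (B (j, i) * (C (j, i))ᴴ) := by
        intro i j
        rw [hCH]
        have e2 : (A i * M * (A i)ᴴ) * (A j * Mᴴ * (A j)ᴴ) =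
            (A i * M * ((A i)ᴴ * A j * Mᴴ)) * (A j)ᴴ := by noncomm_ring
        rw [e2, Matrix.trace_mul_comm]
        congr 1
        simp only [hBdef]
        noncomm_ring
      have hsplit : trace (Φ M * (Φ M)ᴴ) = ∑ p : Fin k × Fin k, trace (B p * (C p)ᴴ) := by
        rw [hΦMH, hΦM, Finset.sum_mul_sum]
        simp only [Matrix.trace_sum]
        rw [Fintype.sum_prod_type, Finset.sum_comm]
        exact Finset.sum_congr rfl fun i _ => Finset.sum_congr rfl fun j _ => hterm j i
      have hre : (trace (Φ M * (Φ M)ᴴ)).re =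
          ∑ p : Fin k × Fin k, (trace (B p * (C p)ᴴ)).re := by
        rw [hsplit, Complex.re_sum]
      -- bound on ∑ tr(B Bᴴ)
      have hsum_inner : ∑ i : Fin k, (trace ((A i * M) * (A i * M)ᴴ)).re = 1 := by
        have e3 : ∀ i : Fin k, trace ((A i * M) * (A i * M)ᴴ) =
            trace ((M * Mᴴ) * ((A i)ᴴ * A i)) := by
          intro i
          have e4 : (A i * M) * (A i * M)ᴴ = A i * (M * Mᴴ * (A i)ᴴ) := by
            simp only [Matrix.conjTranspose_mul]; noncomm_ring
          rw [e4, Matrix.trace_mul_comm]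
          congr 1
          noncomm_ring
        calc ∑ i : Fin k, (trace ((A i * M) * (A i * M)ᴴ)).re
            = (∑ i : Fin k, trace ((M * Mᴴ) * ((A i)ᴴ * A i))).re := by
              rw [Complex.re_sum]
              exact Finset.sum_congr rfl fun i _ => congrArg Complex.re (e3 i)
          _ = (trace ((M * Mᴴ) * ∑ i, (A i)ᴴ * A i)).re := by
              rw [← Matrix.trace_sum, ← Matrix.mul_sum]
          _ = 1 := by rw [hTP, Matrix.mul_one, hMnorm]
      have hBsum : ∑ p : Fin k × Fin k, (trace (B p * (B p)ᴴ)).re ≤ (N:ℝ) * τ := by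
        have e1 : ∀ j i : Fin k, trace (B (j,i) * (B (j,i))ᴴ) =
            trace ((A i * M) * (A i * M)ᴴ * (A j * (A j)ᴴ)) := by
          intro j i
          have e2 : B (j,i) * (B (j,i))ᴴ =
              (A j)ᴴ * (A i * M * Mᴴ * (A i)ᴴ * A j) := by
            simp only [hBdef, Matrix.conjTranspose_mul, Matrix.conjTranspose_conjTranspose]
            noncomm_ring
          rw [e2, Matrix.trace_mul_comm]
          congr 1
          simp only [Matrix.conjTranspose_mul]
          noncomm_ring
        calc ∑ p : Fin k × Fin k, (trace (B p * (B p)ᴴ)).re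
            = ∑ j : Fin k, ∑ i : Fin k,
                (trace ((A i * M) * (A i * M)ᴴ * (A j * (A j)ᴴ))).re := by
              rw [Fintype.sum_prod_type]
              exact Finset.sum_congr rfl fun j _ => Finset.sum_congr rfl fun i _ =>
                congrArg Complex.re (e1 j i)
          _ = ∑ i : Fin k, ∑ j : Fin k,
                (trace ((A i * M) * (A i * M)ᴴ * (A j * (A j)ᴴ))).re := Finset.sum_comm
          _ = ∑ i : Fin k, (trace ((A i * M) * (A i * M)ᴴ * H)).re := by
              refine Finset.sum_congr rfl fun i _ => ?_
              rw [← Complex.re_sum]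
              congr 1
              rw [← Matrix.trace_sum, ← Matrix.mul_sum, ← hHdef]
          _ ≤ ∑ i : Fin k, ((N:ℝ) * τ) * (trace ((A i * M) * (A i * M)ᴴ)).re :=
              Finset.sum_le_sum fun i _ => trace_XXH_mul_le hc (A i * M)
          _ = ((N:ℝ) * τ) * ∑ i : Fin k, (trace ((A i * M) * (A i * M)ᴴ)).re := by
              rw [Finset.mul_sum]
          _ = (N:ℝ) * τ := by rw [hsum_inner, mul_one]
      -- bound on ∑ tr(C Cᴴ)
      have hQpsd : ((((N:ℝ) * τ : ℝ) : ℂ) • (1 : Matrix (Fin N) (Fin N) ℂ) -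
          ∑ j, (A j)ᴴ * H * A j).PosSemidef := by
        have e5 : (((N:ℝ) * τ : ℝ) : ℂ) • (1 : Matrix (Fin N) (Fin N) ℂ) -
            ∑ j, (A j)ᴴ * H * A j =
            ∑ j, (A j)ᴴ * ((((N:ℝ) * τ : ℝ) : ℂ) • (1 : Matrix (Fin N) (Fin N) ℂ) - H) *
              A j := by
          simp only [Matrix.mul_sub, Matrix.sub_mul, Matrix.mul_smul, Matrix.smul_mul,
            Matrix.mul_one, Finset.sum_sub_distrib, ← Finset.smul_sum, hTP]
        rw [e5]
        exact psd_sum _ _ fun j _ => hc.conjTranspose_mul_mul_same (A j)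
      have hCsum : ∑ p : Fin k × Fin k, (trace (C p * (C p)ᴴ)).re ≤ (N:ℝ) * τ := by
        have e6 : ∀ j i : Fin k, trace (C (j,i) * (C (j,i))ᴴ) =
            trace (M * ((A j)ᴴ * (A i * (A i)ᴴ) * A j) * Mᴴ) := by
          intro j i
          rw [hCH]
          congr 1
          simp only [hCdef]
          noncomm_ring
        calc ∑ p : Fin k × Fin k, (trace (C p * (C p)ᴴ)).re
            = ∑ j : Fin k, ∑ i : Fin k,
                (trace (M * ((A j)ᴴ * (A i * (A i)ᴴ) * A j) * Mᴴ)).re := by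
              rw [Fintype.sum_prod_type]
              exact Finset.sum_congr rfl fun j _ => Finset.sum_congr rfl fun i _ =>
                congrArg Complex.re (e6 j i)
          _ = ∑ j : Fin k, (trace (M * ((A j)ᴴ * H * A j) * Mᴴ)).re := by
              refine Finset.sum_congr rfl fun j _ => ?_
              rw [← Complex.re_sum]
              congr 1
              conv_rhs => rw [hHdef]
              simp only [Matrix.mul_sum, Matrix.sum_mul, Matrix.trace_sum]
          _ = (trace (M * (∑ j, (A j)ᴴ * H * A j) * Mᴴ)).re := by
              rw [← Complex.re_sum]
              congr 1
              conv_rhs => rw [Matrix.mul_sum, Matrix.sum_mul, Matrix.trace_sum]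
          _ ≤ ((N:ℝ) * τ) * (trace (M * Mᴴ)).re := trace_conj_psd_le hQpsd M
          _ = (N:ℝ) * τ := by rw [hMnorm, mul_one]
      calc (trace (Φ M * (Φ M)ᴴ)).re
          = ∑ p : Fin k × Fin k, (trace (B p * (C p)ᴴ)).re := hre
        _ ≤ ∑ p : Fin k × Fin k,
              Real.sqrt ((trace (B p * (B p)ᴴ)).re) * Real.sqrt ((trace (C p * (C p)ᴴ)).re) :=
            Finset.sum_le_sum fun p _ => cs_trace (B p) (C p)
        _ ≤ Real.sqrt (∑ p : Fin k × Fin k, (trace (B p * (B p)ᴴ)).re) *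
              Real.sqrt (∑ p : Fin k × Fin k, (trace (C p * (C p)ᴴ)).re) :=
            Real.sum_sqrt_mul_sqrt_le _ (fun p => trace_mul_conjTranspose_re_nonneg _)
              (fun p => trace_mul_conjTranspose_re_nonneg _)
        _ ≤ Real.sqrt ((N:ℝ) * τ) * Real.sqrt ((N:ℝ) * τ) :=
            mul_le_mul (Real.sqrt_le_sqrt hBsum) (Real.sqrt_le_sqrt hCsum)
              (Real.sqrt_nonneg _) (Real.sqrt_nonneg _)
        _ = (N:ℝ) * τ := Real.mul_self_sqrt hc0
    have : hsNorm (Φ M) = Real.sqrt ((trace (Φ M * (Φ M)ᴴ)).re) := rfl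
    rw [this]
    exact Real.sqrt_le_sqrt key
  · refine Real.sqrt_le_sqrt ?_
    calc (N:ℝ) * τ ≤ (N:ℝ) * 1 := mul_le_mul_of_nonneg_left hτ1 hN0
      _ = (N:ℝ) := mul_one _

end
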